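/- Let 𝕂 be ℝ or ℂ, n > 1, and let P₀, Q₀, P, Q be nonzero column vectors in 𝕂ⁿ with Q₀ᵀP₀ = QᵀP ≠ 0. Then there exists an invertible n×n matrix M over 𝕂 such that M⁻¹P₀ = P and MᵀQ₀ = Q. -/

import Mathlib

open Matrix

noncomputable def dotL {𝕂 : Type*} [RCLike 𝕂] {n : ℕ} (q : Fin n → 𝕂) :
    (Fin n → 𝕂) →ₗ[𝕂] 𝕂 where
  toFun x := q ⬝ᵥ x
  map_add' x y := dotProduct_add q x y
  map_smul' c x := by simp [dotProduct_smul, smul_eq_mul]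

theorem dotL_apply {𝕂 : Type*} [RCLike 𝕂] {n : ℕ} (q x : Fin n → 𝕂) :
    dotL q x = q ⬝ᵥ x := rfl

theorem compl_gen {𝕂 : Type*} [RCLike 𝕂] {n : ℕ} (v w : Fin n → 𝕂) (hvw : w ⬝ᵥ v ≠ 0) :
    IsCompl (Submodule.span 𝕂 {v}) (LinearMap.ker (dotL w)) := by
  constructor
  · rw [Submodule.disjoint_def]
    intro x hx1 hx2
    obtain ⟨a, rfl⟩ := Submodule.mem_span_singleton.mp hx1
    have h0 : w ⬝ᵥ (a • v) = 0 := hx2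
    rw [dotProduct_smul, smul_eq_mul] at h0
    rcases mul_eq_zero.mp h0 with h | h
    · simp [h]
    · exact absurd h hvw
  · rw [codisjoint_iff_le_sup]
    intro x _
    refine Submodule.mem_sup.mpr ⟨(w ⬝ᵥ x / (w ⬝ᵥ v)) • v, ?_, x - (w ⬝ᵥ x / (w ⬝ᵥ v)) • v, ?_, by ring⟩
    · exact Submodule.smul_mem _ _ (Submodule.mem_span_singleton_self v)
    · rw [LinearMap.mem_ker, dotL_apply, dotProduct_sub, dotProduct_smul, smul_eq_mul,
        div_mul_cancel₀ _ hvw, sub_self]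

theorem finrank_ker_dot {𝕂 : Type*} [RCLike 𝕂] {n : ℕ} (v w : Fin n → 𝕂) (hvw : w ⬝ᵥ v ≠ 0) :
    Module.finrank 𝕂 (LinearMap.ker (dotL w)) = n - 1 := by
  have hsurj : Function.Surjective (dotL w) := by
    intro y
    refine ⟨(y / (w ⬝ᵥ v)) • v, ?_⟩
    rw [dotL_apply, dotProduct_smul, smul_eq_mul, div_mul_cancel₀ _ hvw]
  have h1 : Module.finrank 𝕂 (LinearMap.range (dotL w)) = 1 := by
    rw [LinearMap.range_eq_top.mpr hsurj, finrank_top, Module.finrank_self]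
  have h2 := LinearMap.finrank_range_add_finrank_ker (dotL w)
  rw [h1, Module.finrank_pi] at h2
  simp only [Fintype.card_fin] at h2
  omega

set_option synthInstance.maxHeartbeats 1000000 in
theorem aux_exists {𝕂 : Type*} [RCLike 𝕂] {n : ℕ} (p₀ q₀ p q : Fin n → 𝕂)
    (hp₀ : p₀ ≠ 0) (hp : p ≠ 0) (hc : q₀ ⬝ᵥ p₀ ≠ 0) (heq : q₀ ⬝ᵥ p₀ = q ⬝ᵥ p) :
    ∃ T : (Fin n → 𝕂) ≃ₗ[𝕂] (Fin n → 𝕂), T p = p₀ ∧ ∀ x, q₀ ⬝ᵥ T x = q ⬝ᵥ x := by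
  classical
  have hqp : q ⬝ᵥ p ≠ 0 := heq ▸ hc
  have compl1 := compl_gen p q hqp
  have compl0 := compl_gen p₀ q₀ hc
  let e1 : (Submodule.span 𝕂 {p}) ≃ₗ[𝕂] (Submodule.span 𝕂 {p₀}) :=
    (LinearEquiv.toSpanNonzeroSingleton 𝕂 _ p hp).symm ≪≫ₗ
      LinearEquiv.toSpanNonzeroSingleton 𝕂 _ p₀ hp₀
  let e2 : (LinearMap.ker (dotL q) : Submodule 𝕂 (Fin n → 𝕂)) ≃ₗ[𝕂]
      (LinearMap.ker (dotL q₀) : Submodule 𝕂 (Fin n → 𝕂)) :=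
    LinearEquiv.ofFinrankEq _ _ (by
      rw [finrank_ker_dot p q hqp, finrank_ker_dot p₀ q₀ hc])
  let T : (Fin n → 𝕂) ≃ₗ[𝕂] (Fin n → 𝕂) :=
    (Submodule.prodEquivOfIsCompl _ _ compl1).symm ≪≫ₗ
      (e1.prodCongr e2) ≪≫ₗ Submodule.prodEquivOfIsCompl _ _ compl0
  have he1p : (e1 ⟨p, Submodule.mem_span_singleton_self p⟩ : Fin n → 𝕂) = p₀ := by
    have h1 : (LinearEquiv.toSpanNonzeroSingleton 𝕂 _ p hp).symm
        ⟨p, Submodule.mem_span_singleton_self p⟩ = 1 := by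
      rw [LinearEquiv.symm_apply_eq]
      exact (LinearEquiv.toSpanNonzeroSingleton_one 𝕂 _ p hp).symm ▸ rfl
    simp only [e1, LinearEquiv.trans_apply, h1]
    exact congrArg Subtype.val (LinearEquiv.toSpanNonzeroSingleton_one 𝕂 _ p₀ hp₀)
  have hTp : T p = p₀ := by
    have hsymm : (Submodule.prodEquivOfIsCompl _ _ compl1).symm p =
        (⟨p, Submodule.mem_span_singleton_self p⟩, 0) := by
      rw [LinearEquiv.symm_apply_eq]
      simp [Submodule.coe_prodEquivOfIsCompl']
    simp only [T, LinearEquiv.trans_apply, hsymm, LinearEquiv.prodCongr_apply,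
      Submodule.coe_prodEquivOfIsCompl', map_zero]
    rw [he1p]
    simp
  have hTK : ∀ x (hx : x ∈ LinearMap.ker (dotL q)), T x ∈ LinearMap.ker (dotL q₀) := by
    intro x hx
    have hsymm : (Submodule.prodEquivOfIsCompl _ _ compl1).symm x =
        (0, (⟨x, hx⟩ : LinearMap.ker (dotL q))) := by
      rw [LinearEquiv.symm_apply_eq]
      simp [Submodule.coe_prodEquivOfIsCompl']
    have : T x = (e2 ⟨x, hx⟩ : Fin n → 𝕂) := by
      simp only [T, LinearEquiv.trans_apply, hsymm, LinearEquiv.prodCongr_apply,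
        Submodule.coe_prodEquivOfIsCompl', map_zero]
      simp
    rw [this]
    exact (e2 ⟨x, hx⟩).2
  refine ⟨T, hTp, fun x => ?_⟩
  have hxsup : x ∈ Submodule.span 𝕂 {p} ⊔ LinearMap.ker (dotL q) :=
    codisjoint_iff_le_sup.mp compl1.2 Submodule.mem_top
  obtain ⟨u, hu, w, hw, hx⟩ := Submodule.mem_sup.mp hxsup
  obtain ⟨a, rfl⟩ := Submodule.mem_span_singleton.mp hu
  have hwq : q ⬝ᵥ w = 0 := hw
  have hTwq : q₀ ⬝ᵥ T w = 0 := hTK w hw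
  subst hx
  rw [map_add, _root_.map_smul, hTp]
  simp [dotProduct_add, dotProduct_smul, hwq, hTwq, heq]

open Matrix in
theorem exists_matrix_solving_system {𝕂 : Type*} [RCLike 𝕂] {n : ℕ} (hn : 1 < n)
    (P₀ Q₀ P Q : Matrix (Fin n) (Fin 1) 𝕂)
    (hP₀ : P₀ ≠ 0) (hQ₀ : Q₀ ≠ 0) (hP : P ≠ 0) (hQ : Q ≠ 0)
    (heq : Q₀ᵀ * P₀ = Qᵀ * P) (hne : Q₀ᵀ * P₀ ≠ 0) :
    ∃ M : Matrix (Fin n) (Fin n) 𝕂, IsUnit M ∧ M⁻¹ * P₀ = P ∧ Mᵀ * Q₀ = Q := by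
  classical
  set p₀ : Fin n → 𝕂 := fun i => P₀ i 0 with hp₀def
  set q₀ : Fin n → 𝕂 := fun i => Q₀ i 0 with hq₀def
  set p : Fin n → 𝕂 := fun i => P i 0 with hpdef
  set q : Fin n → 𝕂 := fun i => Q i 0 with hqdef
  have hvec : ∀ (A : Matrix (Fin n) (Fin 1) 𝕂), A ≠ 0 → (fun i => A i 0) ≠ (0 : Fin n → 𝕂) := by
    intro A hA h
    apply hA
    ext i j
    have hj : j = 0 := Subsingleton.elim j 0
    subst hj
    exact congrFun h i
  have hentry : ∀ (A B : Matrix (Fin n) (Fin 1) 𝕂),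
      (Aᵀ * B) 0 0 = (fun i => A i 0) ⬝ᵥ (fun i => B i 0) := by
    intro A B
    simp [Matrix.mul_apply, Matrix.transpose_apply, dotProduct]
  have hc : q₀ ⬝ᵥ p₀ ≠ 0 := by
    intro h
    apply hne
    ext i j
    have hi : i = 0 := Subsingleton.elim i 0
    have hj : j = 0 := Subsingleton.elim j 0
    subst hi; subst hj
    rw [hentry]
    exact h
  have heqv : q₀ ⬝ᵥ p₀ = q ⬝ᵥ p := by
    rw [← hentry, ← hentry, heq]
  obtain ⟨T, hTp, hTq⟩ := aux_exists p₀ q₀ p q (hvec P₀ hP₀) (hvec P hP) hc heqv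
  set M := LinearMap.toMatrix' (T : (Fin n → 𝕂) →ₗ[𝕂] (Fin n → 𝕂)) with hMdef
  have hmulVec : ∀ v, M.mulVec v = T v := by
    intro v
    rw [← Matrix.toLin'_apply, hMdef, Matrix.toLin'_toMatrix']
    rfl
  have h1 : M * LinearMap.toMatrix' (T.symm : (Fin n → 𝕂) →ₗ[𝕂] (Fin n → 𝕂)) = 1 := by
    rw [hMdef, ← LinearMap.toMatrix'_comp, ← LinearMap.toMatrix'_id (R := 𝕂) (n := Fin n)]
    congr 1
    ext x
    simp
  have hunit : IsUnit M :=
    (Matrix.isUnit_iff_isUnit_det M).mpr (IsUnit.of_mul_eq_one _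
      (by rw [← Matrix.det_mul, h1, Matrix.det_one]))
  have hMP : M * P = P₀ := by
    ext i j
    have hj : j = 0 := Subsingleton.elim j 0
    subst hj
    have := congrFun (hmulVec p) i
    rw [hTp] at this
    simpa [Matrix.mul_apply, Matrix.mulVec, dotProduct] using this
  refine ⟨M, hunit, ?_, ?_⟩
  · rw [← hMP, ← Matrix.mul_assoc,
      Matrix.nonsing_inv_mul M (((Matrix.isUnit_iff_isUnit_det M).mp hunit)), Matrix.one_mul]
  · ext i j
    have hj : j = 0 := Subsingleton.elim j 0
    subst hj
    have hTi := hTq (Pi.single i 1)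
    have hcol : M.mulVec (Pi.single i 1) = fun k => M k i := by
      ext k
      simp [Matrix.mulVec, dotProduct_single]
    rw [hmulVec] at hcol
    rw [hcol] at hTi
    have hq : q ⬝ᵥ Pi.single i 1 = q i := by simp [dotProduct_single]
    rw [hq] at hTi
    simpa [Matrix.mul_apply, Matrix.transpose_apply, dotProduct, mul_comm] using hTi
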